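/- Fix k > 0 and let g(z) = 1/(1 + z²). For ε > 0 define u_ε : ℝ² → ℝ by u_ε(x,y) = x + ε cos(ky), and let R_ε(x,y) = [ |∇u_ε| div( g(|∇u_ε|) ∇u_ε/|∇u_ε| ) ](x,y) be the self-snakes right-hand side. Then, as ε → 0⁺, sup over (x,y) ∈ ℝ² of | R_ε(x,y) + (k² ε/2) cos(ky) | = O(ε²); moreover the curvature term satisfies sup over (x,y) of | div( ∇u_ε/|∇u_ε| )(x,y) + k² ε cos(ky) | = O(ε²). (A level-line-aligned oscillation of frequency k on a unit slope is dampened by the self-snakes evolution with frequency response factor −k²/2, and pre-smoothing does not change this first-order response.) -/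

import Mathlib

open MeasureTheory Filter Topology

noncomputable section

abbrev Plane := EuclideanSpace ℝ (Fin 2)

/-- divergence of a planar vector field -/
def div2 (V : Plane → Plane) (x : Plane) : ℝ :=
  ∑ i : Fin 2, fderiv ℝ (fun y => V y i) x (EuclideanSpace.single i 1)

/-- the Perona–Malik edge-stopping function (β = 1) -/
def g (z : ℝ) : ℝ := 1 / (1 + z ^ 2)

/-- the level-line-aligned perturbed slope u_ε(x,y) = x + ε cos(ky) -/
def uPertY (k ε : ℝ) (p : Plane) : ℝ := p 0 + ε * Real.cos (k * p 1)

/-- the self-snakes right-hand side |∇u| div( g(|∇u|) ∇u/|∇u| ) -/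
def selfSnakesRHS (u : Plane → ℝ) (p : Plane) : ℝ :=
  ‖gradient u p‖ *
    div2 (fun y => (g ‖gradient u y‖ / ‖gradient u y‖) • gradient u y) p

/-- the curvature term div( ∇u/|∇u| ) -/
def curvTerm (u : Plane → ℝ) (p : Plane) : ℝ :=
  div2 (fun y => ‖gradient u y‖⁻¹ • gradient u y) p

def gradVec (k ε : ℝ) (z : ℝ) : Plane :=
  EuclideanSpace.single 0 1 + EuclideanSpace.single 1 (-(ε * k) * Real.sin (k * z))

lemma hasGradient_uPertY (k ε : ℝ) (p : Plane) :
    HasGradientAt (uPertY k ε) (gradVec k ε (p 1)) p := by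
  rw [hasGradientAt_iff_hasFDerivAt]
  have h1 : HasFDerivAt (fun q : Plane => q 0)
      (EuclideanSpace.proj (0 : Fin 2) : Plane →L[ℝ] ℝ) p :=
    by simpa using ((EuclideanSpace.proj (0 : Fin 2) : Plane →L[ℝ] ℝ)).hasFDerivAt
  have hcos : HasDerivAt (fun z : ℝ => Real.cos (k * z))
      (-Real.sin (k * p 1) * k) (p 1) := by
    simpa [Function.comp_def] using (Real.hasDerivAt_cos (k * p 1)).comp (p 1)
      ((hasDerivAt_id (p 1)).const_mul k)
  have h2 : HasFDerivAt (fun q : Plane => Real.cos (k * q 1))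
      ((-Real.sin (k * p 1) * k) • (EuclideanSpace.proj (1 : Fin 2) : Plane →L[ℝ] ℝ)) p :=
    by simpa [Function.comp_def] using hcos.comp_hasFDerivAt p (by simpa using ((EuclideanSpace.proj (1 : Fin 2) : Plane →L[ℝ] ℝ)).hasFDerivAt : HasFDerivAt (fun q : Plane => q 1) (EuclideanSpace.proj (1 : Fin 2) : Plane →L[ℝ] ℝ) p)
  have h3 : HasFDerivAt (uPertY k ε)
      ((EuclideanSpace.proj (0 : Fin 2) : Plane →L[ℝ] ℝ)
        + ε • ((-Real.sin (k * p 1) * k) • (EuclideanSpace.proj (1 : Fin 2) : Plane →L[ℝ] ℝ))) p :=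
    h1.add (h2.const_smul ε)
  refine h3.congr_fderiv ?_
  ext q
  simp [gradVec, InnerProductSpace.toDual_apply_apply, inner_add_left,
    EuclideanSpace.inner_single_left, real_inner_smul_left]
  ring

lemma gradient_uPertY (k ε : ℝ) (p : Plane) :
    gradient (uPertY k ε) p = gradVec k ε (p 1) :=
  (hasGradient_uPertY k ε p).gradient

lemma gradVec_apply0 (k ε z : ℝ) : gradVec k ε z 0 = 1 := by
  simp [gradVec, EuclideanSpace.single_apply]

lemma gradVec_apply1 (k ε z : ℝ) : gradVec k ε z 1 = -(ε * k) * Real.sin (k * z) := by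
  simp [gradVec, EuclideanSpace.single_apply]

lemma norm_gradVec (k ε z : ℝ) :
    ‖gradVec k ε z‖ = Real.sqrt (1 + (ε * k) ^ 2 * Real.sin (k * z) ^ 2) := by
  rw [EuclideanSpace.norm_eq, Fin.sum_univ_two, gradVec_apply0, gradVec_apply1]
  rw [Real.norm_eq_abs, Real.norm_eq_abs, sq_abs, sq_abs]
  ring_nf

lemma div2_of_y (φ0 φ1 : ℝ → ℝ) (d0 d1 : ℝ) (p : Plane)
    (h0 : HasDerivAt φ0 d0 (p 1)) (h1 : HasDerivAt φ1 d1 (p 1))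
    (V : Plane → Plane) (hV0 : ∀ y, V y 0 = φ0 (y 1)) (hV1 : ∀ y, V y 1 = φ1 (y 1)) :
    div2 V p = d1 := by
  have hproj : HasFDerivAt (fun q : Plane => q 1)
      (EuclideanSpace.proj (1 : Fin 2) : Plane →L[ℝ] ℝ) p := by
    simpa using ((EuclideanSpace.proj (1 : Fin 2) : Plane →L[ℝ] ℝ)).hasFDerivAt
  have H0 : HasFDerivAt (fun y : Plane => V y 0)
      (d0 • (EuclideanSpace.proj (1 : Fin 2) : Plane →L[ℝ] ℝ)) p := by
    have := h0.comp_hasFDerivAt p hproj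
    simpa [funext hV0, Function.comp_def] using this
  have H1 : HasFDerivAt (fun y : Plane => V y 1)
      (d1 • (EuclideanSpace.proj (1 : Fin 2) : Plane →L[ℝ] ℝ)) p := by
    have := h1.comp_hasFDerivAt p hproj
    simpa [funext hV1, Function.comp_def] using this
  rw [div2, Fin.sum_univ_two, H0.fderiv, H1.fderiv]
  simp [EuclideanSpace.single_apply]

section scalar
variable (k ε : ℝ)

def mf (z : ℝ) : ℝ := Real.sqrt (1 + (ε * k) ^ 2 * Real.sin (k * z) ^ 2)

lemma mf_sq (z : ℝ) : mf k ε z ^ 2 = 1 + (ε * k) ^ 2 * Real.sin (k * z) ^ 2 :=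
  Real.sq_sqrt (by positivity)

lemma one_le_mf (z : ℝ) : 1 ≤ mf k ε z := by
  have h := Real.sqrt_le_sqrt (show (1:ℝ) ≤ 1 + (ε * k) ^ 2 * Real.sin (k * z) ^ 2 from le_add_of_nonneg_right (by positivity))
  simpa [mf] using h

lemma mf_pos (z : ℝ) : 0 < mf k ε z := lt_of_lt_of_le one_pos (one_le_mf k ε z)

lemma hasDerivAt_sin' (z : ℝ) :
    HasDerivAt (fun z => Real.sin (k * z)) (Real.cos (k * z) * k) z := by
  simpa [Function.comp_def] using (Real.hasDerivAt_sin (k * z)).comp z ((hasDerivAt_id z).const_mul k)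

lemma hasDerivAt_mf (z : ℝ) :
    HasDerivAt (mf k ε)
      (1 / (2 * mf k ε z) * ((ε*k)^2 * (2 * Real.sin (k*z) * (Real.cos (k*z) * k)))) z := by
  have hq : HasDerivAt (fun z => 1 + (ε * k) ^ 2 * Real.sin (k * z) ^ 2)
      ((ε*k)^2 * (2 * Real.sin (k*z) * (Real.cos (k*z) * k))) z := by
    have := (((hasDerivAt_sin' k z).pow 2).const_mul ((ε*k)^2)).const_add 1
    simpa [mul_comm, mul_assoc, mul_left_comm] using this
  have h0 : (1 + (ε * k) ^ 2 * Real.sin (k * z) ^ 2) ≠ 0 := by positivity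
  exact (Real.hasDerivAt_sqrt h0).comp z hq

lemma curvTerm_eq (p : Plane) :
    curvTerm (uPertY k ε) p
      = -(ε * k * k * Real.cos (k * p 1)) / (mf k ε (p 1)) ^ 3 := by
  have hm0 : mf k ε (p 1) ≠ 0 := (mf_pos k ε (p 1)).ne'
  have hφ0 : HasDerivAt (fun z => (mf k ε z)⁻¹)
      (-(1 / (2 * mf k ε (p 1)) * ((ε*k)^2 * (2 * Real.sin (k*p 1) * (Real.cos (k*p 1) * k)))) / (mf k ε (p 1))^2) (p 1) :=
    (hasDerivAt_mf k ε (p 1)).inv hm0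
  have hφ1 : HasDerivAt (fun z => (mf k ε z)⁻¹ * (-(ε*k) * Real.sin (k*z)))
      ((-(1 / (2 * mf k ε (p 1)) * ((ε*k)^2 * (2 * Real.sin (k*p 1) * (Real.cos (k*p 1) * k)))) / (mf k ε (p 1))^2) * (-(ε*k) * Real.sin (k*p 1))
        + (mf k ε (p 1))⁻¹ * (-(ε*k) * (Real.cos (k*p 1) * k))) (p 1) :=
    hφ0.mul ((hasDerivAt_sin' k _).const_mul (-(ε*k)))
  rw [curvTerm, div2_of_y (fun z => (mf k ε z)⁻¹) (fun z => (mf k ε z)⁻¹ * (-(ε*k) * Real.sin (k*z))) _ _ p hφ0 hφ1 _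
    (fun y => by simp [gradient_uPertY, norm_gradVec, gradVec_apply0, mf])
    (fun y => by simp [gradient_uPertY, norm_gradVec, gradVec_apply1, mf])]
  have hm2 := mf_sq k ε (p 1)
  set m := mf k ε (p 1)
  set s := Real.sin (k * p 1)
  set c := Real.cos (k * p 1)
  field_simp
  linear_combination (-(ε*k^2*c)) * hm2
end scalar

lemma norm_gradVec' (k ε z : ℝ) : ‖gradVec k ε z‖ = mf k ε z := by
  rw [norm_gradVec, mf]

lemma selfSnakes_eq (k ε : ℝ) (p : Plane) :
    selfSnakesRHS (uPertY k ε) p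
      = -(ε * k * k * Real.cos (k * p 1)) *
          ((2 + (ε*k)^2 * Real.sin (k*p 1)^2) * (1 + (ε*k)^2 * Real.sin (k*p 1)^2)
            - (ε*k)^2 * Real.sin (k*p 1)^2 * (4 + 3 * ((ε*k)^2 * Real.sin (k*p 1)^2)))
        / ((2 + (ε*k)^2 * Real.sin (k*p 1)^2) ^ 2 * (1 + (ε*k)^2 * Real.sin (k*p 1)^2)) := by
  have hm0 : mf k ε (p 1) ≠ 0 := (mf_pos k ε (p 1)).ne'
  have hh0 : (1 + (mf k ε (p 1))^2) * mf k ε (p 1) ≠ 0 := by positivity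
  have hm' := hasDerivAt_mf k ε (p 1)
  have hh : HasDerivAt (fun z => (1 + (mf k ε z)^2) * mf k ε z)
      (((2:ℕ) * (mf k ε (p 1))^1 * (1 / (2 * mf k ε (p 1)) * ((ε*k)^2 * (2 * Real.sin (k*p 1) * (Real.cos (k*p 1) * k))))) * mf k ε (p 1)
        + (1 + (mf k ε (p 1))^2) * (1 / (2 * mf k ε (p 1)) * ((ε*k)^2 * (2 * Real.sin (k*p 1) * (Real.cos (k*p 1) * k))))) (p 1) :=
    ((hm'.pow 2).const_add 1).mul hm'
  have hψ0 := hh.inv hh0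
  have hψ1 := hψ0.mul ((hasDerivAt_sin' k (p 1)).const_mul (-(ε*k)))
  rw [selfSnakesRHS, div2_of_y
      (fun z => ((1 + (mf k ε z)^2) * mf k ε z)⁻¹)
      (fun z => ((1 + (mf k ε z)^2) * mf k ε z)⁻¹ * (-(ε*k) * Real.sin (k*z))) _ _ p hψ0 hψ1 _
    (fun y => by
      simp only [PiLp.smul_apply, smul_eq_mul, gradient_uPertY, norm_gradVec',
        gradVec_apply0, g, mul_one]
      rw [div_div, one_div])
    (fun y => by
      simp only [PiLp.smul_apply, smul_eq_mul, gradient_uPertY, norm_gradVec',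
        gradVec_apply1, g]
      rw [div_div, one_div])]
  rw [gradient_uPertY, norm_gradVec']
  simp only [Pi.inv_apply]
  have hm2 := mf_sq k ε (p 1)
  set m := mf k ε (p 1)
  set s := Real.sin (k * p 1)
  set c := Real.cos (k * p 1)
  have ht : (ε*k)^2 * s^2 = m^2 - 1 := by linarith
  rw [ht]
  have h2 : (2 + (m^2 - 1)) ≠ 0 := by nlinarith [mf_pos k ε (p 1)]
  have h1 : (1 + (m^2 - 1)) ≠ 0 := by nlinarith [mf_pos k ε (p 1)]
  field_simp
  linear_combination (-(ε*k^2*c*(m^2 + 5*m^4 + 7*m^6 + 3*m^8))) * hm2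

lemma curv_bound (k ε : ℝ) (hk : 0 < k) (hε : 0 < ε) (hε1 : ε ≤ 1) (hεk : ε * k ≤ 1)
    (p : Plane) :
    |curvTerm (uPertY k ε) p + k ^ 2 * ε * Real.cos (k * p 1)| ≤ 20 * k ^ 4 * ε ^ 2 := by
  rw [curvTerm_eq]
  have hm2 := mf_sq k ε (p 1)
  have hm1 : 1 ≤ mf k ε (p 1) := one_le_mf k ε (p 1)
  set m := mf k ε (p 1)
  set s := Real.sin (k * p 1)
  set c := Real.cos (k * p 1)
  have hm0 : m ≠ 0 := by positivity
  have hs2 : s ^ 2 ≤ 1 := Real.sin_sq_le_one _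
  have hc : |c| ≤ 1 := Real.abs_cos_le_one _
  have hεk0 : 0 ≤ ε * k := le_of_lt (by positivity)
  have ht1 : (ε * k) ^ 2 * s ^ 2 ≤ 1 := by nlinarith [sq_nonneg s, sq_nonneg (ε*k)]
  have hmle : m ≤ 2 := by nlinarith
  have hcube : m ^ 3 - 1 ≤ 3 * ((ε * k) ^ 2 * s ^ 2) := by nlinarith
  have key : -(ε * k * k * c) / m ^ 3 + k ^ 2 * ε * c
      = (k ^ 2 * ε * c) * (m ^ 3 - 1) / m ^ 3 := by
    field_simp; ring
  rw [key, abs_div]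
  have h3 : (1:ℝ) ≤ |m ^ 3| := by
    rw [abs_of_pos (by positivity)]; nlinarith
  calc |k ^ 2 * ε * c * (m ^ 3 - 1)| / |m ^ 3| ≤ |k ^ 2 * ε * c * (m ^ 3 - 1)| :=
        div_le_self (abs_nonneg _) h3
    _ = k ^ 2 * ε * |c| * (m ^ 3 - 1) := by
        rw [abs_mul, abs_mul, abs_of_nonneg (by positivity : (0:ℝ) ≤ k ^ 2 * ε),
          abs_of_nonneg (by nlinarith : (0:ℝ) ≤ m ^ 3 - 1)]
    _ ≤ k ^ 2 * ε * 1 * (m ^ 3 - 1) := by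
        have hm3 : (0:ℝ) ≤ m ^ 3 - 1 := by nlinarith
        apply mul_le_mul_of_nonneg_right _ hm3
        have : (0:ℝ) ≤ k ^ 2 * ε := by positivity
        nlinarith
    _ ≤ k ^ 2 * ε * 1 * (3 * ((ε * k) ^ 2 * s ^ 2)) := by
        apply mul_le_mul_of_nonneg_left hcube (by positivity)
    _ ≤ k ^ 2 * ε * 1 * (3 * (ε * k) ^ 2) := by
        apply mul_le_mul_of_nonneg_left _ (by positivity)
        nlinarith [sq_nonneg (ε*k)]
    _ = 3 * k ^ 4 * ε ^ 2 * ε := by ring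
    _ ≤ 3 * k ^ 4 * ε ^ 2 * 1 := by
        apply mul_le_mul_of_nonneg_left hε1 (by positivity)
    _ ≤ 20 * k ^ 4 * ε ^ 2 := by nlinarith [sq_nonneg ε, pow_pos hk 4, sq_nonneg (k^2*ε)]

lemma selfSnakes_bound (k ε : ℝ) (hk : 0 < k) (hε : 0 < ε) (hε1 : ε ≤ 1) (hεk : ε * k ≤ 1)
    (p : Plane) :
    |selfSnakesRHS (uPertY k ε) p + k ^ 2 * ε / 2 * Real.cos (k * p 1)| ≤ 20 * k ^ 4 * ε ^ 2 := by
  rw [selfSnakes_eq]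
  set s := Real.sin (k * p 1)
  set c := Real.cos (k * p 1)
  set t := (ε * k) ^ 2 * s ^ 2 with ht
  have ht0 : 0 ≤ t := by positivity
  have hs2 : s ^ 2 ≤ 1 := Real.sin_sq_le_one _
  have hεk0 : 0 ≤ ε * k := le_of_lt (by positivity)
  have ht1 : t ≤ 1 := by rw [ht]; nlinarith [sq_nonneg s, sq_nonneg (ε*k)]
  have hc : |c| ≤ 1 := Real.abs_cos_le_one _
  have hD2 : (2 + t) ≠ 0 := by positivity
  have hD1 : (1 + t) ≠ 0 := by positivity
  have key : -(ε * k * k * c) * ((2 + t) * (1 + t) - t * (4 + 3 * t))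
        / ((2 + t) ^ 2 * (1 + t)) + k ^ 2 * ε / 2 * c
      = (k ^ 2 * ε * c) * (t * (10 + 9 * t + t ^ 2)) / (2 * ((2 + t) ^ 2 * (1 + t))) := by
    field_simp; ring
  rw [key, abs_div]
  have h3 : (1:ℝ) ≤ |2 * ((2 + t) ^ 2 * (1 + t))| := by
    rw [abs_of_pos (by positivity)]; nlinarith
  calc |k ^ 2 * ε * c * (t * (10 + 9 * t + t ^ 2))| / |2 * ((2 + t) ^ 2 * (1 + t))|
      ≤ |k ^ 2 * ε * c * (t * (10 + 9 * t + t ^ 2))| := div_le_self (abs_nonneg _) h3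
    _ = k ^ 2 * ε * |c| * (t * (10 + 9 * t + t ^ 2)) := by
        rw [abs_mul, abs_mul, abs_of_nonneg (by positivity : (0:ℝ) ≤ k ^ 2 * ε),
          abs_of_nonneg (by nlinarith : (0:ℝ) ≤ t * (10 + 9 * t + t ^ 2))]
    _ ≤ k ^ 2 * ε * 1 * (t * (10 + 9 * t + t ^ 2)) := by
        have htt : (0:ℝ) ≤ t * (10 + 9 * t + t ^ 2) := by nlinarith
        apply mul_le_mul_of_nonneg_right _ htt
        have : (0:ℝ) ≤ k ^ 2 * ε := by positivity
        nlinarith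
    _ ≤ k ^ 2 * ε * 1 * (t * 20) := by
        apply mul_le_mul_of_nonneg_left _ (by positivity)
        nlinarith
    _ ≤ k ^ 2 * ε * 1 * ((ε * k) ^ 2 * 20) := by
        apply mul_le_mul_of_nonneg_left _ (by positivity)
        rw [ht]
        nlinarith [sq_nonneg (ε*k)]
    _ = 20 * k ^ 4 * ε ^ 2 * ε := by ring
    _ ≤ 20 * k ^ 4 * ε ^ 2 * 1 := by
        apply mul_le_mul_of_nonneg_left hε1 (by positivity)
    _ = 20 * k ^ 4 * ε ^ 2 := by ring


/-- A level-line-aligned oscillation of frequency k on a unit slope is dampened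
by the self-snakes evolution with frequency response factor −k²/2, uniformly up
to O(ε²); the curvature term itself is −k²ε cos(ky) up to a uniform O(ε²). -/
theorem self_snakes_levelline_aligned_frequency_response (k : ℝ) (hk : 0 < k) :
    (∃ C : ℝ, ∀ᶠ ε in 𝓝[>] (0:ℝ), ∀ p : Plane,
      |selfSnakesRHS (uPertY k ε) p + k ^ 2 * ε / 2 * Real.cos (k * p 1)|
        ≤ C * ε ^ 2) ∧
    (∃ C : ℝ, ∀ᶠ ε in 𝓝[>] (0:ℝ), ∀ p : Plane,
      |curvTerm (uPertY k ε) p + k ^ 2 * ε * Real.cos (k * p 1)|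
        ≤ C * ε ^ 2) := by
  have hδ : (0:ℝ) < min 1 (1/k) := lt_min one_pos (by positivity)
  have hev : ∀ᶠ ε in 𝓝[>] (0:ℝ), ε ∈ Set.Ioo (0:ℝ) (min 1 (1/k)) :=
    Ioo_mem_nhdsGT_of_mem ⟨le_refl 0, hδ⟩
  constructor
  · refine ⟨20 * k ^ 4, ?_⟩
    filter_upwards [hev] with ε hε p
    have hε0 : 0 < ε := hε.1
    have hε1 : ε ≤ 1 := le_of_lt (lt_of_lt_of_le hε.2 (min_le_left _ _))
    have hεk : ε * k ≤ 1 := by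
      have := lt_of_lt_of_le hε.2 (min_le_right _ _)
      calc ε * k ≤ (1/k) * k := by nlinarith
        _ = 1 := by field_simp
    simpa [mul_assoc] using selfSnakes_bound k ε hk hε0 hε1 hεk p
  · refine ⟨20 * k ^ 4, ?_⟩
    filter_upwards [hev] with ε hε p
    have hε0 : 0 < ε := hε.1
    have hε1 : ε ≤ 1 := le_of_lt (lt_of_lt_of_le hε.2 (min_le_left _ _))
    have hεk : ε * k ≤ 1 := by
      have := lt_of_lt_of_le hε.2 (min_le_right _ _)
      calc ε * k ≤ (1/k) * k := by nlinarith
        _ = 1 := by field_simp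
    simpa [mul_assoc] using curv_bound k ε hk hε0 hε1 hεk p
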